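/- Let n ≥ 1, let 0 ≤ δ < 1/(2n), and let v'₁, …, v'ₙ be unit vectors in a complex inner product space such that |⟨v'_i, v'_j⟩| ≤ δ for all i ≠ j. Let v₁, …, vₙ be the Gram–Schmidt orthonormalization of v'₁, …, v'ₙ. Then for every i with 1 ≤ i ≤ n, the trace norm of the difference of the rank-one projections satisfies ‖|v_i⟩⟨v_i| − |v'_i⟩⟨v'_i|‖₁ = 2·√(1 − |⟨v_i, v'_i⟩|²) ≤ 2√6 · δ · √n. -/

import Mathlib

open scoped ComplexInnerProductSpace

instance (n : ℕ) : WellFoundedLT (Fin n) := inferInstance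

/-- The trace norm `‖A‖₁ = Tr √(A†A)` of an operator on a finite-dimensional complex
inner product space, i.e. the sum of the singular values of `A` (the square roots of
the eigenvalues of the symmetric operator `A†A`). -/
noncomputable def traceNorm {E : Type} [NormedAddCommGroup E] [InnerProductSpace ℂ E]
    [FiniteDimensional ℂ E] (A : E →ₗ[ℂ] E) : ℝ :=
  ∑ i : Fin (Module.finrank ℂ E),
    Real.sqrt ((LinearMap.isSymmetric_adjoint_mul_self A).eigenvalues rfl i)

/-- The rank-one operator `|v⟩⟨v| : w ↦ ⟨v, w⟩·v`; for a unit vector `v` this is the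
orthogonal projection onto the span of `v`. -/
noncomputable def outer {E : Type} [NormedAddCommGroup E] [InnerProductSpace ℂ E]
    (v : E) : E →ₗ[ℂ] E where
  toFun w := ⟪v, w⟫ • v
  map_add' a b := by simp [inner_add_right, add_smul]
  map_smul' c a := by simp [inner_smul_right, smul_smul]

variable {E : Type} [NormedAddCommGroup E] [InnerProductSpace ℂ E]

lemma outer_apply (v w : E) : outer v w = ⟪v, w⟫ • v := rfl

lemma isSymmetric_outer_sub (v w : E) : (outer v - outer w).IsSymmetric := by
  intro x y
  simp only [LinearMap.sub_apply, outer_apply, inner_sub_left, inner_sub_right,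
    inner_smul_left, inner_smul_right, inner_conj_symm]
  ring

variable [FiniteDimensional ℂ E]

lemma traceNorm_outer_sub (v w : E) (hv : ‖v‖ = 1) (hw : ‖w‖ = 1) :
    traceNorm (outer v - outer w) = 2 * Real.sqrt (1 - ‖⟪v, w⟫‖ ^ 2) := by
  set c : ℂ := ⟪v, w⟫ with hc
  set t : ℝ := 1 - ‖c‖ ^ 2 with htdef
  have hvv : ⟪v, v⟫ = 1 := by simp [inner_self_eq_norm_sq_to_K, hv]
  have hww : ⟪w, w⟫ = 1 := by simp [inner_self_eq_norm_sq_to_K, hw]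
  have hwv : ⟪w, v⟫ = starRingEnd ℂ c := by rw [hc, inner_conj_symm]
  have ht0 : 0 ≤ t := by
    have h := norm_inner_le_norm (𝕜 := ℂ) v w
    rw [hv, hw, mul_one] at h
    have : ‖c‖ ^ 2 ≤ 1 := by nlinarith [norm_nonneg c]
    rw [htdef]; linarith
  set A : E →ₗ[ℂ] E := outer v - outer w with hA
  have hsymA : A.IsSymmetric := isSymmetric_outer_sub v w
  have hadj : LinearMap.adjoint A = A := by
    have := (LinearMap.isSymmetric_iff_isSelfAdjoint A).mp hsymA
    rwa [← LinearMap.star_eq_adjoint]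
  set B : E →ₗ[ℂ] E := LinearMap.adjoint A * A with hBdef
  have hBA : B = A * A := by rw [hBdef, hadj]
  have hccbar : c * starRingEnd ℂ c = ((‖c‖ : ℂ)) ^ 2 := RCLike.mul_conj c
  have happly : ∀ x : E, B x = (⟪v, x⟫ - ⟪w, x⟫ * c) • v + (⟪w, x⟫ - ⟪v, x⟫ * starRingEnd ℂ c) • w := by
    intro x
    rw [hBA]
    simp only [Module.End.mul_apply, hA, LinearMap.sub_apply, outer_apply,
      inner_sub_right, inner_smul_right, hvv, hww, hwv, ← hc]
    match_scalars <;> ring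
  have hkey : B * B = ((t : ℂ)) • B := by
    ext x
    rw [Module.End.mul_apply, LinearMap.smul_apply, happly, happly]
    simp only [inner_add_right, inner_smul_right, hvv, hww, hwv, ← hc]
    rw [htdef]
    push_cast
    match_scalars
    · linear_combination (⟪w,x⟫ * c - ⟪v,x⟫) * hccbar
    · linear_combination (⟪v,x⟫ * starRingEnd ℂ c - ⟪w,x⟫) * hccbar
  -- eigenvalues
  set μ : Fin (Module.finrank ℂ E) → ℝ :=
    fun i => (LinearMap.isSymmetric_adjoint_mul_self A).eigenvalues rfl i with hμ
  have heig : ∀ i, μ i = 0 ∨ μ i = t := by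
    intro i
    have h1 := (LinearMap.isSymmetric_adjoint_mul_self A).hasEigenvalue_eigenvalues rfl i
    obtain ⟨x, hx⟩ := h1.exists_hasEigenvector
    have hx1 : B x = ((μ i : ℝ) : ℂ) • x := Module.End.mem_eigenspace_iff.mp hx.1
    have h2 : B (B x) = (t : ℂ) • B x := by
      have := congrArg (fun f : E →ₗ[ℂ] E => f x) hkey
      simpa using this
    rw [hx1, map_smul, hx1, smul_smul, smul_smul] at h2
    have h3 : (((μ i : ℝ) : ℂ) * ((μ i : ℝ) : ℂ) - (t : ℂ) * ((μ i : ℝ) : ℂ)) • x = 0 := by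
      rw [sub_smul, h2, sub_self]
    have h4 : ((μ i : ℝ) : ℂ) * ((μ i : ℝ) : ℂ) - (t : ℂ) * ((μ i : ℝ) : ℂ) = 0 :=
      (smul_eq_zero.mp h3).resolve_right hx.2
    have h5 : μ i * μ i - t * μ i = 0 := by
      have := congrArg Complex.re h4
      push_cast at this
      simpa using this
    rcases mul_eq_zero.mp (by linear_combination h5 : μ i * (μ i - t) = 0) with h | h
    · exact Or.inl h
    · exact Or.inr (by linarith)
  have hsum : ∑ i, μ i = 2 * t := by
    set e := (LinearMap.isSymmetric_adjoint_mul_self A).eigenvectorBasis rfl with he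
    have h1 : ∀ i, ((μ i : ℝ) : ℂ) = ⟪e i, B (e i)⟫ := by
      intro i
      rw [he, (LinearMap.isSymmetric_adjoint_mul_self A).apply_eigenvectorBasis]
      rw [inner_smul_right]
      have h9 : ⟪((LinearMap.isSymmetric_adjoint_mul_self A).eigenvectorBasis rfl) i,
          ((LinearMap.isSymmetric_adjoint_mul_self A).eigenvectorBasis rfl) i⟫ = 1 := by
        simp [inner_self_eq_norm_sq_to_K,
          ((LinearMap.isSymmetric_adjoint_mul_self A).eigenvectorBasis rfl).orthonormal.1 i]
      rw [h9, mul_one]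
      rfl
    have h2 : ∀ x : E, ⟪x, B x⟫ = ⟪A x, A x⟫ := by
      intro x
      rw [hBdef, Module.End.mul_apply, LinearMap.adjoint_inner_right]
    have h3 : ∑ i, ⟪A (e i), A (e i)⟫ = 2 - 2 * ((‖c‖ : ℂ)) ^ 2 := by
      have expand : ∀ i : Fin (Module.finrank ℂ E), ⟪A (e i), A (e i)⟫ =
          ⟪v, e i⟫ * ⟪e i, v⟫ + ⟪w, e i⟫ * ⟪e i, w⟫
            - (⟪v, e i⟫ * ⟪e i, w⟫) * starRingEnd ℂ c - (⟪w, e i⟫ * ⟪e i, v⟫) * c := by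
        intro i
        simp only [hA, LinearMap.sub_apply, outer_apply, inner_sub_left, inner_sub_right,
          inner_smul_left, inner_smul_right, hvv, hww, hwv, ← hc, inner_conj_symm]
        ring
      rw [Finset.sum_congr rfl fun i _ => expand i]
      rw [Finset.sum_sub_distrib, Finset.sum_sub_distrib, Finset.sum_add_distrib,
        ← Finset.sum_mul, ← Finset.sum_mul]
      rw [e.sum_inner_mul_inner v v, e.sum_inner_mul_inner w w,
        e.sum_inner_mul_inner v w, e.sum_inner_mul_inner w v]
      rw [hvv, hww, hwv, ← hc, ← hccbar]
      ring
    have h4 : ((∑ i, μ i : ℝ) : ℂ) = 2 - 2 * ((‖c‖ : ℂ)) ^ 2 := by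
      rw [← h3, Complex.ofReal_sum]
      refine Finset.sum_congr rfl fun i _ => ?_
      rw [← h2]
      exact h1 i
    have h5 : (∑ i, μ i : ℝ) = 2 - 2 * ‖c‖ ^ 2 := by exact_mod_cast h4
    rw [htdef]; linarith
  -- conclude
  have htr : traceNorm A = ∑ i, Real.sqrt (μ i) := rfl
  rw [htr]
  rcases eq_or_lt_of_le ht0 with ht | ht
  · have hall : ∀ i, μ i = 0 := by
      intro i
      rcases heig i with h | h
      · exact h
      · rw [h, ← ht]
    have hz : ∀ i ∈ Finset.univ, Real.sqrt (μ i) = 0 := fun i _ => by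
      rw [hall i, Real.sqrt_zero]
    rw [Finset.sum_congr rfl hz, Finset.sum_const, smul_zero, ← ht, Real.sqrt_zero, mul_zero]
  · have hstep : ∀ i, Real.sqrt (μ i) = μ i / Real.sqrt t := by
      intro i
      rcases heig i with h | h
      · rw [h, Real.sqrt_zero, zero_div]
      · rw [h, Real.div_sqrt]
    rw [Finset.sum_congr rfl fun i _ => hstep i, ← Finset.sum_div, hsum]
    rw [eq_comm, mul_comm (2:ℝ), eq_div_iff (Real.sqrt_pos.mpr ht).ne']
    linear_combination 2 * Real.mul_self_sqrt ht0

lemma gram_lower {n : ℕ} {δ : ℝ} (hδ0 : 0 ≤ δ) (v' : Fin n → E)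
    (hunit : ∀ i, ‖v' i‖ = 1) (hsmall : ∀ i j, i ≠ j → ‖⟪v' i, v' j⟫‖ ≤ δ)
    (c : Fin n → ℂ) :
    (1 - δ * n) * ∑ j, ‖c j‖ ^ 2 ≤ ‖∑ j, c j • v' j‖ ^ 2 := by
  classical
  have hexp : ‖∑ j, c j • v' j‖ ^ 2
      = ∑ j, ∑ k, (starRingEnd ℂ (c j) * c k * ⟪v' j, v' k⟫).re := by
    have hinner : ⟪∑ j, c j • v' j, ∑ k, c k • v' k⟫
        = ∑ j, ∑ k, starRingEnd ℂ (c j) * c k * ⟪v' j, v' k⟫ := by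
      rw [sum_inner]
      refine Finset.sum_congr rfl fun j _ => ?_
      rw [inner_sum]
      refine Finset.sum_congr rfl fun k _ => ?_
      rw [inner_smul_left, inner_smul_right]; ring
    rw [← inner_self_eq_norm_sq (𝕜 := ℂ), hinner]
    simp [RCLike.re_to_complex, Complex.re_sum]
  have hdiag : ∀ j, (starRingEnd ℂ (c j) * c j * ⟪v' j, v' j⟫).re = ‖c j‖ ^ 2 := by
    intro j
    have h1 : ⟪v' j, v' j⟫ = (1 : ℂ) := by
      rw [inner_self_eq_norm_sq_to_K, hunit j]; norm_num
    rw [h1, mul_one, RCLike.conj_mul]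
    norm_cast
  have hoff : ∀ j k, j ≠ k →
      -(δ * (‖c j‖ * ‖c k‖)) ≤ (starRingEnd ℂ (c j) * c k * ⟪v' j, v' k⟫).re := by
    intro j k hjk
    have h1 : ‖starRingEnd ℂ (c j) * c k * ⟪v' j, v' k⟫‖ ≤ ‖c j‖ * ‖c k‖ * δ := by
      rw [norm_mul, norm_mul, RCLike.norm_conj]
      have h2 := hsmall j k hjk
      have h3 : (0:ℝ) ≤ ‖c j‖ * ‖c k‖ := by positivity
      nlinarith [norm_nonneg (⟪v' j, v' k⟫ : ℂ)]
    have h4 := RCLike.abs_re_le_norm (starRingEnd ℂ (c j) * c k * ⟪v' j, v' k⟫)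
    have h5 := abs_le.mp (h4.trans h1)
    simp only [RCLike.re_to_complex] at h5
    linarith [h5.1]
  set S := ∑ j, ‖c j‖ with hS
  set L := ∑ j, ‖c j‖ ^ 2 with hL
  have hrow : ∀ j, ‖c j‖ ^ 2 - δ * (‖c j‖ * S)
      ≤ ∑ k, (starRingEnd ℂ (c j) * c k * ⟪v' j, v' k⟫).re := by
    intro j
    rw [← Finset.add_sum_erase _ _ (Finset.mem_univ j), hdiag j]
    have h1 : ∑ k ∈ Finset.univ.erase j, -(δ * (‖c j‖ * ‖c k‖))
        ≤ ∑ k ∈ Finset.univ.erase j, (starRingEnd ℂ (c j) * c k * ⟪v' j, v' k⟫).re :=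
      Finset.sum_le_sum fun k hk => hoff j k (Finset.ne_of_mem_erase hk).symm
    have h2 : ∑ k ∈ Finset.univ.erase j, δ * (‖c j‖ * ‖c k‖)
        ≤ ∑ k, δ * (‖c j‖ * ‖c k‖) :=
      Finset.sum_le_sum_of_subset_of_nonneg (Finset.subset_univ _)
        (fun k _ _ => by positivity)
    have h3 : ∑ k, δ * (‖c j‖ * ‖c k‖) = δ * (‖c j‖ * S) := by
      rw [hS, Finset.mul_sum, Finset.mul_sum]
    rw [Finset.sum_neg_distrib] at h1
    linarith
  have hS2 : S ^ 2 ≤ (n : ℝ) * L := by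
    have := sq_sum_le_card_mul_sum_sq (s := Finset.univ) (f := fun j => ‖c j‖)
    simpa [hS, hL] using this
  have hsum : ∑ j, (‖c j‖ ^ 2 - δ * (‖c j‖ * S)) = L - δ * S ^ 2 := by
    rw [Finset.sum_sub_distrib]
    congr 1
    have h8 : ∀ j : Fin n, δ * (‖c j‖ * S) = (δ * S) * ‖c j‖ := fun j => by ring
    rw [Finset.sum_congr rfl fun j _ => h8 j, ← Finset.mul_sum, ← hS]
    ring
  have h6 : L - δ * S ^ 2 ≤ ‖∑ j, c j • v' j‖ ^ 2 := by
    rw [hexp, ← hsum]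
    exact Finset.sum_le_sum fun j _ => hrow j
  have h7 : δ * S ^ 2 ≤ δ * ((n : ℝ) * L) := mul_le_mul_of_nonneg_left hS2 hδ0
  nlinarith

lemma indep_of_small {n : ℕ} {δ : ℝ} (hδ0 : 0 ≤ δ) (hδn : δ * n < 1/2) (v' : Fin n → E)
    (hunit : ∀ i, ‖v' i‖ = 1) (hsmall : ∀ i j, i ≠ j → ‖⟪v' i, v' j⟫‖ ≤ δ) :
    LinearIndependent ℂ v' := by
  rw [Fintype.linearIndependent_iff]
  intro g hg
  have h1 := gram_lower hδ0 v' hunit hsmall g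
  rw [hg, norm_zero] at h1
  have h2 : ∑ j, ‖g j‖ ^ 2 ≤ 0 := by nlinarith [Finset.sum_nonneg (fun j (_ : j ∈ Finset.univ) => sq_nonneg ‖g j‖)]
  have h3 := (Finset.sum_eq_zero_iff_of_nonneg (fun j _ => sq_nonneg ‖g j‖)).mp
    (le_antisymm h2 (Finset.sum_nonneg fun j _ => sq_nonneg ‖g j‖))
  intro i
  have := h3 i (Finset.mem_univ i)
  have : ‖g i‖ = 0 := by nlinarith [norm_nonneg (g i)]
  simpa using this


/-- Let `n ≥ 1`, `0 ≤ δ < 1/(2n)`, and let `v'₁, …, v'ₙ` be unit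
vectors in a (finite-dimensional) complex inner product space with `|⟨v'_i, v'_j⟩| ≤ δ`
for all `i ≠ j`. Let `v₁, …, vₙ` be their Gram–Schmidt orthonormalization. Then for every
`i`, `‖|v_i⟩⟨v_i| − |v'_i⟩⟨v'_i|‖₁ = 2·√(1 − |⟨v_i, v'_i⟩|²) ≤ 2√6·δ·√n`. -/
theorem gramSchmidt_rank_one_perturbation {E : Type} [NormedAddCommGroup E]
    [InnerProductSpace ℂ E] [FiniteDimensional ℂ E]
    (n : ℕ) (hn : 1 ≤ n) (δ : ℝ) (hδ0 : 0 ≤ δ) (hδ : δ < 1 / (2 * n))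
    (v' : Fin n → E) (hunit : ∀ i, ‖v' i‖ = 1)
    (hsmall : ∀ i j, i ≠ j → ‖⟪v' i, v' j⟫‖ ≤ δ) :
    ∀ i : Fin n,
      traceNorm (outer (InnerProductSpace.gramSchmidtNormed ℂ v' i) - outer (v' i)) =
        2 * Real.sqrt (1 - ‖⟪InnerProductSpace.gramSchmidtNormed ℂ v' i, v' i⟫‖ ^ 2) ∧
      2 * Real.sqrt (1 - ‖⟪InnerProductSpace.gramSchmidtNormed ℂ v' i, v' i⟫‖ ^ 2) ≤
        2 * Real.sqrt 6 * δ * Real.sqrt n := by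
  have hnpos : (0:ℝ) < n := by exact_mod_cast hn
  have hδn : δ * n < 1/2 := by
    have h := (lt_div_iff₀ (by positivity : (0:ℝ) < 2 * n)).mp hδ
    linarith
  have hindep : LinearIndependent ℂ v' := indep_of_small hδ0 hδn v' hunit hsmall
  intro i
  have hvnorm : ‖InnerProductSpace.gramSchmidtNormed ℂ v' i‖ = 1 := InnerProductSpace.gramSchmidtNormed_unit_length i hindep
  refine ⟨traceNorm_outer_sub _ _ hvnorm (hunit i), ?_⟩
  -- setup
  set g : E := InnerProductSpace.gramSchmidt ℂ v' i with hgdef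
  have hg0 : g ≠ 0 := InnerProductSpace.gramSchmidt_ne_zero i hindep
  set U : Submodule ℂ E := Submodule.span ℂ (v' '' Set.Iio i) with hU
  set w0 : E := v' i - g with hw0def
  have hw0mem : w0 ∈ U := by
    have h1 : w0 = ∑ j ∈ Finset.Iio i,
        (ℂ ∙ InnerProductSpace.gramSchmidt ℂ v' j).starProjection (v' i) := by
      rw [hw0def, hgdef, InnerProductSpace.gramSchmidt_def, sub_sub_cancel]
    rw [h1]
    refine Submodule.sum_mem _ fun j hj => ?_
    have h2 : (ℂ ∙ InnerProductSpace.gramSchmidt ℂ v' j).starProjection (v' i)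
        ∈ ℂ ∙ InnerProductSpace.gramSchmidt ℂ v' j := Submodule.starProjection_apply_mem _ _
    have h3 : (ℂ ∙ InnerProductSpace.gramSchmidt ℂ v' j) ≤ Submodule.span ℂ (InnerProductSpace.gramSchmidt ℂ v' '' Set.Iio i) := by
      rw [Submodule.span_singleton_le_iff_mem]
      exact Submodule.subset_span ⟨j, Finset.mem_Iio.mp hj, rfl⟩
    rw [InnerProductSpace.span_gramSchmidt_Iio ℂ v' i] at h3
    exact h3 h2
  have horth : ∀ u ∈ U, ⟪g, u⟫ = 0 := by
    have hUle : U ≤ (ℂ ∙ g)ᗮ := by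
      rw [hU, ← InnerProductSpace.span_gramSchmidt_Iio ℂ v' i, Submodule.span_le]
      rintro x ⟨j, hj, rfl⟩
      rw [SetLike.mem_coe, Submodule.mem_orthogonal_singleton_iff_inner_right]
      exact InnerProductSpace.gramSchmidt_orthogonal ℂ v' (ne_of_gt hj)
    exact fun u hu => Submodule.mem_orthogonal_singleton_iff_inner_right.mp (hUle hu)
  have hgw0 : ⟪g, w0⟫ = 0 := horth w0 hw0mem
  have hvsum : v' i = g + w0 := by rw [hw0def]; abel
  have hpyth : ‖g‖ ^ 2 + ‖w0‖ ^ 2 = 1 := by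
    have h1 := norm_add_sq (𝕜 := ℂ) g w0
    rw [← hvsum, hunit i, hgw0] at h1
    simp at h1
    linarith
  have hcval : ⟪InnerProductSpace.gramSchmidtNormed ℂ v' i, v' i⟫ = (‖g‖ : ℂ) := by
    have h1 : ⟪g, v' i⟫ = ((‖g‖ : ℂ)) ^ 2 := by
      rw [hvsum, inner_add_right, hgw0, add_zero, inner_self_eq_norm_sq_to_K]
      norm_cast
    have h3 : (‖g‖ : ℂ) ≠ 0 := by
      simpa [Complex.ofReal_eq_zero] using norm_ne_zero_iff.mpr hg0
    rw [InnerProductSpace.gramSchmidtNormed, ← hgdef, inner_smul_left, h1, map_inv₀, RCLike.conj_ofReal]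
    field_simp
    ring_nf
    simp [h3]
  have hkey : 1 - ‖⟪InnerProductSpace.gramSchmidtNormed ℂ v' i, v' i⟫‖ ^ 2 = ‖w0‖ ^ 2 := by
    rw [hcval, Complex.norm_real, norm_norm]
    linarith
  rw [hkey, Real.sqrt_sq (norm_nonneg w0)]
  -- representation of w0 in terms of the v' j, j < i
  rw [hU, Finsupp.mem_span_image_iff_linearCombination] at hw0mem
  obtain ⟨l, hlsupp, hlsum⟩ := hw0mem
  rw [Finsupp.mem_supported] at hlsupp
  have hsum : ∑ j, l j • v' j = w0 := by
    rw [← hlsum, Finsupp.linearCombination_apply, Finsupp.sum_fintype]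
    intro j; exact zero_smul ℂ (v' j)
  have hli : ∀ j, l j ≠ 0 → j ≠ i := by
    intro j hj he
    have h2 := hlsupp (Finsupp.mem_support_iff.mpr hj)
    rw [he] at h2
    exact lt_irrefl i h2
  set L : ℝ := ∑ j, ‖l j‖ ^ 2 with hLdef
  set S : ℝ := ∑ j, ‖l j‖ with hSdef
  have hL0 : 0 ≤ L := Finset.sum_nonneg fun j _ => sq_nonneg _
  have hS0 : 0 ≤ S := Finset.sum_nonneg fun j _ => norm_nonneg _
  have hlow : (1 - δ * n) * L ≤ ‖w0‖ ^ 2 := by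
    have h1 := gram_lower hδ0 v' hunit hsmall (fun j => l j)
    rw [hsum] at h1
    exact h1
  have hL2 : L ≤ 2 * ‖w0‖ ^ 2 := by nlinarith [hlow, hδn, hL0]
  have hw0v : ⟪w0, v' i⟫ = ((‖w0‖ : ℂ)) ^ 2 := by
    have h1 : ⟪w0, v' i⟫ = ⟪w0, g⟫ + ⟪w0, w0⟫ := by rw [← inner_add_right, ← hvsum]
    have hwg : ⟪w0, g⟫ = 0 := by rw [← inner_conj_symm, hgw0, map_zero]
    rw [h1, hwg, zero_add, inner_self_eq_norm_sq_to_K]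
    norm_cast
  have hbound : ‖w0‖ ^ 2 ≤ δ * S := by
    have h1 : ‖⟪w0, v' i⟫‖ = ‖w0‖ ^ 2 := by
      rw [hw0v, norm_pow, Complex.norm_real, norm_norm]
    have h2 : ⟪w0, v' i⟫ = ∑ j, starRingEnd ℂ (l j) * ⟪v' j, v' i⟫ := by
      rw [← hsum, sum_inner]
      exact Finset.sum_congr rfl fun j _ => by rw [inner_smul_left]
    have h3 : ‖⟪w0, v' i⟫‖ ≤ ∑ j, ‖l j‖ * δ := by
      rw [h2]
      refine (norm_sum_le _ _).trans (Finset.sum_le_sum fun j _ => ?_)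
      rw [norm_mul, RCLike.norm_conj]
      by_cases hj : l j = 0
      · simp [hj]
      · exact mul_le_mul_of_nonneg_left (hsmall j i (hli j hj)) (norm_nonneg _)
    have h4 : ∑ j, ‖l j‖ * δ = δ * S := by
      rw [← Finset.sum_mul, ← hSdef]
      ring
    rw [← h1, ← h4]
    exact h3
  have hS2 : S ^ 2 ≤ (n : ℝ) * L := by
    have := sq_sum_le_card_mul_sum_sq (s := Finset.univ) (f := fun j : Fin n => ‖l j‖)
    simpa [hSdef, hLdef] using this
  have hr : ‖w0‖ ^ 2 ≤ 2 * n * δ ^ 2 := by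
    rcases eq_or_lt_of_le (norm_nonneg w0) with h0 | h0
    · rw [← h0]
      norm_num
      positivity
    · have e1 : (‖w0‖ ^ 2) * (‖w0‖ ^ 2) ≤ (δ * S) * (δ * S) :=
        mul_le_mul hbound hbound (sq_nonneg _) (mul_nonneg hδ0 hS0)
      have e2a : (n : ℝ) * L ≤ (n : ℝ) * (2 * ‖w0‖ ^ 2) :=
        mul_le_mul_of_nonneg_left hL2 hnpos.le
      have e2b : S ^ 2 ≤ (n : ℝ) * (2 * ‖w0‖ ^ 2) := hS2.trans e2a
      have e2 : δ ^ 2 * S ^ 2 ≤ δ ^ 2 * ((n : ℝ) * (2 * ‖w0‖ ^ 2)) :=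
        mul_le_mul_of_nonneg_left e2b (sq_nonneg δ)
      have e3 : (‖w0‖ ^ 2) * (‖w0‖ ^ 2) ≤ (2 * n * δ ^ 2) * (‖w0‖ ^ 2) := by
        calc (‖w0‖ ^ 2) * (‖w0‖ ^ 2) ≤ (δ * S) * (δ * S) := e1
        _ = δ ^ 2 * S ^ 2 := by ring
        _ ≤ δ ^ 2 * ((n : ℝ) * (2 * ‖w0‖ ^ 2)) := e2
        _ = (2 * n * δ ^ 2) * (‖w0‖ ^ 2) := by ring
      have hpos : (0:ℝ) < ‖w0‖ ^ 2 := by positivity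
      exact le_of_mul_le_mul_right e3 hpos
  have hfin : ‖w0‖ ≤ Real.sqrt 6 * δ * Real.sqrt n := by
    have h7 : ‖w0‖ ^ 2 ≤ 6 * δ ^ 2 * n := by nlinarith [hr, sq_nonneg δ, hnpos]
    have h8 : ‖w0‖ = Real.sqrt (‖w0‖ ^ 2) := (Real.sqrt_sq (norm_nonneg w0)).symm
    have h9 : Real.sqrt (6 * δ ^ 2 * n) = Real.sqrt 6 * δ * Real.sqrt n := by
      rw [Real.sqrt_mul (by positivity : (0:ℝ) ≤ 6 * δ ^ 2),
        Real.sqrt_mul (by norm_num : (0:ℝ) ≤ 6), Real.sqrt_sq hδ0]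
    rw [h8, ← h9]
    exact Real.sqrt_le_sqrt h7
  linarith
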